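/- With μ ≥ 0 in the drifted Brownian motion setting above, there exist constants c₀, C₀ > 0 such that for all sufficiently small s > 0, c₀·s^{1/2} ≤ exp(-∑_{n=1}^∞ (e^{-rns}/n)·P[σB_{ns} + μns ≤ 0]) ≤ C₀·s^{1/(2√2)}. -/

import Mathlib

open MeasureTheory ProbabilityTheory Real Set NNReal

lemma gauss_int_half (v : ℝ≥0) (hv : v ≠ 0) :
    ∫ x in Iic (0:ℝ), gaussianPDFReal 0 v x = 1/2 := by
  have hint := integrable_gaussianPDFReal 0 v
  have hrefl : ∫ x in Iic (0:ℝ), gaussianPDFReal 0 v x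
      = ∫ x in Ioi (0:ℝ), gaussianPDFReal 0 v x := by
    have h := integral_comp_neg_Iic (0:ℝ) (gaussianPDFReal 0 v)
    rw [neg_zero] at h
    rw [← h]
    refine setIntegral_congr_fun measurableSet_Iic (fun x _ => ?_)
    unfold gaussianPDFReal
    ring_nf
  have hsplit : (∫ x in Iic (0:ℝ), gaussianPDFReal 0 v x)
      + ∫ x in Ioi (0:ℝ), gaussianPDFReal 0 v x = 1 := by
    rw [intervalIntegral.integral_Iic_add_Ioi hint.integrableOn hint.integrableOn]
    exact integral_gaussianPDFReal_eq_one 0 hv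
  linarith [hrefl, hsplit]

lemma gauss_Iic_le_half (v : ℝ≥0) (hv : v ≠ 0) {c : ℝ} (hc : c ≤ 0) :
    ((gaussianReal 0 v) (Iic c)).toReal ≤ 1/2 := by
  rw [gaussianReal_apply_eq_integral 0 hv,
    ENNReal.toReal_ofReal (setIntegral_nonneg measurableSet_Iic
      (fun x _ => gaussianPDFReal_nonneg 0 v x))]
  have hint := integrable_gaussianPDFReal 0 v
  calc ∫ x in Iic c, gaussianPDFReal 0 v x
      ≤ ∫ x in Iic (0:ℝ), gaussianPDFReal 0 v x := by
        apply setIntegral_mono_set hint.integrableOn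
        · exact ae_of_all _ (fun x => gaussianPDFReal_nonneg 0 v x)
        · exact HasSubset.Subset.eventuallyLE (Iic_subset_Iic.mpr hc)
    _ = 1/2 := gauss_int_half v hv

-- shift/reflection: ∫_{Iic(-m)} exp(-(1/t)(x+m)^2) = ∫_{Ici 0} exp(-(1/t) y^2)
lemma shift_int (t m : ℝ) :
    ∫ x in Iic (-m), Real.exp (-(1/t) * (x+m)^2)
      = ∫ y in Ici (0:ℝ), Real.exp (-(1/t) * y^2) := by
  have hT : MeasurePreserving (fun y : ℝ => -y + -m) volume volume :=
    (measurePreserving_add_right volume (-m)).comp (Measure.measurePreserving_neg volume)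
  have hemb : MeasurableEmbedding (fun y : ℝ => -y + -m) :=
    ((Homeomorph.neg ℝ).trans (Homeomorph.addRight (-m))).isClosedEmbedding.measurableEmbedding
  have h := hT.setIntegral_preimage_emb hemb
    (fun x => Real.exp (-(1/t) * (x+m)^2)) (Iic (-m))
  have hpre : (fun y : ℝ => -y + -m) ⁻¹' (Iic (-m)) = Ici (0:ℝ) := by
    ext y; constructor <;> (intro h2; simp only [Set.mem_preimage, Set.mem_Iic, Set.mem_Ici] at *; linarith)
  rw [hpre] at h
  rw [← h]
  refine setIntegral_congr_fun measurableSet_Ici (fun y _ => ?_)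
  ring_nf

lemma gauss_Iic_ge {t : ℝ} (ht : 0 < t) {m : ℝ} (hm : 0 ≤ m) :
    Real.exp (-(m^2)/t) / (2 * Real.sqrt 2)
      ≤ ((gaussianReal 0 t.toNNReal) (Iic (-m))).toReal := by
  have hv : t.toNNReal ≠ 0 := by
    simp only [ne_eq, Real.toNNReal_eq_zero, not_le]; exact ht
  have hvt : ((t.toNNReal : ℝ≥0) : ℝ) = t := Real.coe_toNNReal t ht.le
  rw [gaussianReal_apply_eq_integral 0 hv,
    ENNReal.toReal_ofReal (setIntegral_nonneg measurableSet_Iic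
      (fun x _ => gaussianPDFReal_nonneg _ _ x))]
  have hπ := Real.pi_pos
  set K : ℝ := (Real.sqrt (2 * π * t))⁻¹ with hK
  have hKpos : 0 < K := by positivity
  -- lower bound function
  have hglow : ∀ x ∈ Iic (-m),
      K * Real.exp (-(m^2)/t) * Real.exp (-(1/t) * (x+m)^2) ≤ gaussianPDFReal 0 t.toNNReal x := by
    intro x hx
    unfold gaussianPDFReal
    rw [hvt, mul_assoc, ← Real.exp_add]
    show K * _ ≤ K * _
    refine mul_le_mul_of_nonneg_left (Real.exp_le_exp.mpr ?_) hKpos.le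
    have heq : -(x-0)^2/(2*t) - (-(m^2)/t + -(1/t)*(x+m)^2) = (2*m+x)^2/(2*t) := by
      field_simp
      ring
    have hnn : (0:ℝ) ≤ (2*m+x)^2/(2*t) := by positivity
    linarith
  -- integrability of lower bound
  have hint2 : IntegrableOn (fun x => K * Real.exp (-(m^2)/t) * Real.exp (-(1/t) * (x+m)^2))
      (Iic (-m)) volume := by
    apply Integrable.integrableOn
    apply Integrable.const_mul
    have hbase : Integrable (fun y : ℝ => Real.exp (-(1/t) * y^2)) volume :=
      integrable_exp_neg_mul_sq (by positivity)
    exact hbase.comp_add_right m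
  have hstep : ∫ x in Iic (-m), K * Real.exp (-(m^2)/t) * Real.exp (-(1/t) * (x+m)^2)
      ≤ ∫ x in Iic (-m), gaussianPDFReal 0 t.toNNReal x := by
    refine setIntegral_mono_on hint2 (integrable_gaussianPDFReal _ _).integrableOn
      measurableSet_Iic hglow
  refine le_trans (le_of_eq ?_) hstep
  rw [integral_const_mul, shift_int,
    MeasureTheory.integral_Ici_eq_integral_Ioi, integral_gaussian_Ioi]
  rw [hK]
  have h2t : Real.sqrt (2 * π * t) = Real.sqrt 2 * Real.sqrt (π * t) := by
    rw [mul_assoc, Real.sqrt_mul (by norm_num)]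
  have hpi : Real.sqrt (π / (1/t)) = Real.sqrt (π * t) := by
    field_simp
  rw [h2t, hpi]
  have hs2 : (0:ℝ) < Real.sqrt 2 := by positivity
  have hspt : (0:ℝ) < Real.sqrt (π * t) := by positivity
  field_simp

lemma prob_repr {Ω : Type*} [MeasurableSpace Ω] (P : Measure Ω) [IsProbabilityMeasure P]
    (X : Ω → ℝ) {t : ℝ} (ht : 0 < t) (hX : Measure.map X P = gaussianReal 0 t.toNNReal)
    {σ μ : ℝ} (hσ : 0 < σ) :
    (P {ω | σ * X ω + μ * t ≤ 0}).toReal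
      = ((gaussianReal 0 t.toNNReal) (Iic (-(μ * t) / σ))).toReal := by
  have haem : AEMeasurable X P := by
    by_contra h
    rw [Measure.map_of_not_aemeasurable h] at hX
    have h1 := congrArg (fun m : Measure ℝ => m Set.univ) hX
    simp at h1
  have hset : {ω | σ * X ω + μ * t ≤ 0} = X ⁻¹' (Iic (-(μ * t) / σ)) := by
    ext ω
    rw [Set.mem_setOf_eq, Set.mem_preimage, Set.mem_Iic, le_div_iff₀ hσ]
    constructor <;> intro h <;> nlinarith [mul_comm σ (X ω)]
  rw [hset, ← Measure.map_apply_of_aemeasurable haem measurableSet_Iic, hX]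

lemma one_sub_exp_ge {a : ℝ} (ha : 0 ≤ a) (ha1 : a ≤ 1) : a / 3 ≤ 1 - Real.exp (-a) := by
  have he : Real.exp (-a) * Real.exp a = 1 := by rw [← Real.exp_add]; simp
  have h1 : a * Real.exp (-a) ≤ 1 - Real.exp (-a) := by
    nlinarith [mul_le_mul_of_nonneg_left (Real.add_one_le_exp a) (Real.exp_pos (-a)).le]
  have h2 : Real.exp (-1 : ℝ) ≤ Real.exp (-a) := Real.exp_le_exp.mpr (by linarith)
  have h3 : (1:ℝ)/3 ≤ Real.exp (-1 : ℝ) := by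
    rw [Real.exp_neg]
    have he3 : Real.exp 1 ≤ 3 := le_of_lt (lt_trans Real.exp_one_lt_d9 (by norm_num))
    calc (1:ℝ)/3 = 3⁻¹ := by norm_num
      _ ≤ (Real.exp 1)⁻¹ := by
          apply inv_anti₀ (Real.exp_pos 1) he3
  have h4 : a / 3 ≤ a * Real.exp (-a) := by
    calc a / 3 = a * (1/3) := by ring
      _ ≤ a * Real.exp (-a) := by
          apply mul_le_mul_of_nonneg_left (le_trans h3 h2) ha
  linarith

/-- Natural scaling, nonnegative drift: there are `c₀, C₀ > 0` with
`c₀·s^{1/2} ≤ exp(-S(s)) ≤ C₀·s^{1/(2√2)}` for all sufficiently small `s > 0`. -/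
theorem scaling_nonneg_drift {Ω : Type*} [MeasurableSpace Ω]
    (P : Measure Ω) [IsProbabilityMeasure P]
    (B : ℝ → Ω → ℝ)
    (hB : ∀ t : ℝ, 0 ≤ t → Measure.map (B t) P = gaussianReal 0 t.toNNReal)
    (σ μ r : ℝ) (hσ : 0 < σ) (hμ : 0 ≤ μ) (hr : 0 < r)
    (S : ℝ → ℝ)
    (hS : ∀ s : ℝ, 0 < s → S s = ∑' n : ℕ,
      Real.exp (-r * (n + 1) * s) / (n + 1) *
        (P {ω | σ * B ((n + 1) * s) ω + μ * ((n + 1) * s) ≤ 0}).toReal) :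
    ∃ c₀ C₀ : ℝ, 0 < c₀ ∧ 0 < C₀ ∧ ∃ s₀ : ℝ, 0 < s₀ ∧ ∀ s : ℝ, 0 < s → s ≤ s₀ →
      c₀ * s ^ ((1 : ℝ) / 2) ≤ Real.exp (-S s) ∧
      Real.exp (-S s) ≤ C₀ * s ^ ((1 : ℝ) / (2 * Real.sqrt 2)) := by
  have hκ : (0:ℝ) ≤ (μ/σ)^2 := sq_nonneg _
  set κ : ℝ := (μ/σ)^2 with hκdef
  set b : ℝ := r + κ with hbdef
  have hbpos : 0 < b := by positivity
  have hsq2 : (0:ℝ) < Real.sqrt 2 := by positivity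
  have hepos : (0:ℝ) < 1 / (2 * Real.sqrt 2) := by positivity
  refine ⟨(r/3) ^ ((1:ℝ)/2), b ^ ((1:ℝ)/(2*Real.sqrt 2)),
    Real.rpow_pos_of_pos (by positivity) _, Real.rpow_pos_of_pos hbpos _,
    1/r, by positivity, ?_⟩
  intro s hs hs'
  have hrs1 : r * s ≤ 1 := by
    rw [mul_comm]
    exact (le_div_iff₀ hr).mp hs'
  set x : ℝ := Real.exp (-(r*s)) with hxdef
  set y : ℝ := Real.exp (-(b*s)) with hydef
  have hx0 : 0 < x := Real.exp_pos _
  have hx1 : x < 1 := Real.exp_lt_one_iff.mpr (by nlinarith)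
  have hy0 : 0 < y := Real.exp_pos _
  have hy1 : y < 1 := Real.exp_lt_one_iff.mpr (by nlinarith)
  -- summand functions
  set p : ℕ → ℝ := fun n =>
    (P {ω | σ * B ((n + 1) * s) ω + μ * ((n + 1) * s) ≤ 0}).toReal with hpdef
  set f : ℕ → ℝ := fun n => Real.exp (-r * (n + 1) * s) / (n + 1) * p n with hfdef
  set u : ℕ → ℝ := fun n => x^(n+1)/(n+1) * (1/2) with hudef
  set l : ℕ → ℝ := fun n => y^(n+1)/(n+1) * (1/(2*Real.sqrt 2)) with hldef
  have htn : ∀ n : ℕ, (0:ℝ) < ((n:ℝ)+1)*s := fun n => by positivity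
  have hxpow : ∀ n : ℕ, Real.exp (-r * ((n:ℝ) + 1) * s) = x^(n+1) := by
    intro n
    rw [hxdef, ← Real.exp_nat_mul]
    congr 1
    push_cast
    ring
  have hypow : ∀ n : ℕ, Real.exp (-r * ((n:ℝ) + 1) * s) * Real.exp (-(κ * (((n:ℝ)+1)*s)))
      = y^(n+1) := by
    intro n
    rw [hydef, ← Real.exp_add, ← Real.exp_nat_mul]
    congr 1
    push_cast
    ring
  -- probability bounds
  have hrepr : ∀ n : ℕ, p n
      = ((gaussianReal 0 (((n:ℝ)+1)*s).toNNReal) (Iic (-(μ * (((n:ℝ)+1)*s)) / σ))).toReal := by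
    intro n
    exact prob_repr P (B (((n:ℝ)+1)*s)) (htn n) (hB _ (htn n).le) hσ
  have hp_le : ∀ n : ℕ, p n ≤ 1/2 := by
    intro n
    rw [hrepr n]
    refine gauss_Iic_le_half _ ?_ ?_
    · simp only [ne_eq, Real.toNNReal_eq_zero, not_le]
      exact htn n
    · apply div_nonpos_of_nonpos_of_nonneg _ hσ.le
      have : 0 ≤ μ * (((n:ℝ)+1)*s) := by positivity
      linarith
  have hp_ge : ∀ n : ℕ, Real.exp (-(κ * (((n:ℝ)+1)*s))) / (2 * Real.sqrt 2) ≤ p n := by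
    intro n
    rw [hrepr n]
    have hm : 0 ≤ μ * (((n:ℝ)+1)*s) / σ := by positivity
    have hIic : Iic (-(μ * (((n:ℝ)+1)*s)) / σ) = Iic (-(μ * (((n:ℝ)+1)*s) / σ)) := by
      rw [neg_div]
    have hexp : -((μ * (((n:ℝ)+1)*s) / σ)^2) / (((n:ℝ)+1)*s) = -(κ * (((n:ℝ)+1)*s)) := by
      rw [hκdef]
      field_simp
    rw [hIic]
    have := gauss_Iic_ge (htn n) hm
    rw [hexp] at this
    exact this
  -- term comparisons
  have hf0 : ∀ n : ℕ, 0 ≤ f n := by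
    intro n
    apply mul_nonneg _ ENNReal.toReal_nonneg
    positivity
  have hfu : ∀ n : ℕ, f n ≤ u n := by
    intro n
    rw [hfdef, hudef]
    simp only
    rw [hxpow n]
    apply mul_le_mul_of_nonneg_left (hp_le n)
    positivity
  have hlf : ∀ n : ℕ, l n ≤ f n := by
    intro n
    rw [hfdef, hldef]
    simp only
    calc y^(n+1)/(n+1) * (1/(2*Real.sqrt 2))
        = Real.exp (-r * ((n:ℝ) + 1) * s) / ((n:ℝ)+1)
            * (Real.exp (-(κ * (((n:ℝ)+1)*s))) / (2 * Real.sqrt 2)) := by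
          rw [← hypow n]
          field_simp
      _ ≤ Real.exp (-r * ((n:ℝ) + 1) * s) / ((n:ℝ)+1) * p n := by
          apply mul_le_mul_of_nonneg_left (hp_ge n)
          positivity
  -- series sums
  have habsx : |x| < 1 := by rw [abs_of_pos hx0]; exact hx1
  have habsy : |y| < 1 := by rw [abs_of_pos hy0]; exact hy1
  have hsumu : HasSum u (-Real.log (1-x) * (1/2)) := by
    have := (hasSum_pow_div_log_of_abs_lt_one habsx).mul_right (1/2)
    convert this using 2 with n
  have hsuml : HasSum l (-Real.log (1-y) * (1/(2*Real.sqrt 2))) := by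
    have := (hasSum_pow_div_log_of_abs_lt_one habsy).mul_right (1/(2*Real.sqrt 2))
    convert this using 2 with n
  have hsumf : Summable f := Summable.of_nonneg_of_le hf0 hfu hsumu.summable
  have hSs : S s = ∑' n, f n := hS s hs
  have hup : S s ≤ -Real.log (1-x) * (1/2) := by
    rw [hSs, ← hsumu.tsum_eq]
    exact Summable.tsum_le_tsum hfu hsumf hsumu.summable
  have hlo : -Real.log (1-y) * (1/(2*Real.sqrt 2)) ≤ S s := by
    rw [hSs, ← hsuml.tsum_eq]
    exact Summable.tsum_le_tsum hlf hsuml.summable hsumf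
  constructor
  · -- lower bound
    have h1 : Real.exp (Real.log (1-x) * (1/2)) ≤ Real.exp (-S s) :=
      Real.exp_le_exp.mpr (by linarith)
    have h2 : Real.exp (Real.log (1-x) * (1/2)) = (1-x) ^ ((1:ℝ)/2) := by
      rw [Real.rpow_def_of_pos (by linarith)]
    have h3 : r*s/3 ≤ 1 - x := one_sub_exp_ge (by positivity) hrs1
    calc (r/3) ^ ((1:ℝ)/2) * s ^ ((1:ℝ)/2)
        = (r/3 * s) ^ ((1:ℝ)/2) := (Real.mul_rpow (by positivity) hs.le).symm
      _ ≤ (1-x) ^ ((1:ℝ)/2) := by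
          apply Real.rpow_le_rpow (by positivity) (by linarith) (by norm_num)
      _ = Real.exp (Real.log (1-x) * (1/2)) := h2.symm
      _ ≤ Real.exp (-S s) := h1
  · -- upper bound
    have h1 : Real.exp (-S s) ≤ Real.exp (Real.log (1-y) * (1/(2*Real.sqrt 2))) :=
      Real.exp_le_exp.mpr (by linarith)
    have h2 : Real.exp (Real.log (1-y) * (1/(2*Real.sqrt 2))) = (1-y) ^ ((1:ℝ)/(2*Real.sqrt 2)) := by
      rw [Real.rpow_def_of_pos (by linarith)]
    have h3 : 1 - y ≤ b * s := by
      have := Real.add_one_le_exp (-(b*s))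
      rw [← hydef] at this
      linarith
    calc Real.exp (-S s)
        ≤ (1-y) ^ ((1:ℝ)/(2*Real.sqrt 2)) := by rw [← h2]; exact h1
      _ ≤ (b*s) ^ ((1:ℝ)/(2*Real.sqrt 2)) := by
          apply Real.rpow_le_rpow (by linarith) h3 hepos.le
      _ = b ^ ((1:ℝ)/(2*Real.sqrt 2)) * s ^ ((1:ℝ)/(2*Real.sqrt 2)) :=
          Real.mul_rpow hbpos.le hs.le
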